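/- Let n ∈ ℤ^d_{>0} be a velocity vector and let Z_n := [0,e_1] + ... + [0,e_d] + [0,n] be the lonely runner zonotope. Then the number of interior lattice points of Z_n satisfies #(int(Z_n) ∩ ℤ^d) = Σ_ℓ φ(ℓ), where the sum runs over all positive integers ℓ that divide n_j for at least one index j ∈ {1,...,d}, and φ is Euler's totient function. -/

import Mathlib

open Pointwise

/-- A point of `ℝ^d` all of whose coordinates are integers. -/
def IsLatticePoint {d : ℕ} (x : Fin d → ℝ) : Prop := ∀ i, ∃ z : ℤ, x i = (z : ℝ)

def lrD {d : ℕ} (n : Fin d → ℤ) : Finset ℕ :=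
  Finset.univ.biUnion (fun j : Fin d => (n j).toNat.divisors)

def lrQ {d : ℕ} (n : Fin d → ℤ) : Finset ℚ :=
  (lrD n).biUnion (fun ℓ =>
    (Finset.filter ℓ.Coprime (Finset.range ℓ)).image (fun a : ℕ => 1 - (a : ℚ) / (ℓ : ℚ)))

lemma lrD_pos {d : ℕ} {n : Fin d → ℤ} {ℓ : ℕ} (h : ℓ ∈ lrD n) : 0 < ℓ := by
  simp only [lrD, Finset.mem_biUnion] at h
  obtain ⟨j, -, hj⟩ := h
  exact Nat.pos_of_mem_divisors hj

lemma den_lr {ℓ a : ℕ} (hl : 0 < ℓ) (ha : a < ℓ) (hcop : ℓ.Coprime a) :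
    ((1 : ℚ) - (a : ℚ) / (ℓ : ℚ)).den = ℓ := by
  have hcast : (1 : ℚ) - (a : ℚ) / (ℓ : ℚ) = ((ℓ - a : ℤ) : ℚ) / ((ℓ : ℤ) : ℚ) := by
    have : ((ℓ : ℚ)) ≠ 0 := by positivity
    field_simp
    push_cast
    ring
  rw [hcast]
  have hco : Nat.Coprime ((ℓ : ℤ) - (a : ℤ)).natAbs (ℓ : ℤ).natAbs := by
    have h1 : ((ℓ : ℤ) - (a : ℤ)).natAbs = ℓ - a := by omega
    have h2 : ((ℓ : ℤ) : ℤ).natAbs = ℓ := by omega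
    rw [h1, h2]
    exact (Nat.coprime_self_sub_left ha.le).mpr hcop.symm
  have := Rat.den_div_eq_of_coprime (a := (ℓ : ℤ) - a) (b := (ℓ : ℤ)) (by exact_mod_cast hl) hco
  exact_mod_cast this

lemma mem_lrQ_iff {d : ℕ} {n : Fin d → ℤ} {q : ℚ} :
    q ∈ lrQ n ↔ 0 < q ∧ q ≤ 1 ∧ q.den ∈ lrD n := by
  constructor
  · intro h
    simp only [lrQ, Finset.mem_biUnion, Finset.mem_image, Finset.mem_filter,
      Finset.mem_range] at h
    obtain ⟨ℓ, hℓ, a, ⟨ha, hcop⟩, rfl⟩ := h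
    have hl : 0 < ℓ := lrD_pos hℓ
    have hℓQ : (0:ℚ) < (ℓ:ℚ) := by exact_mod_cast hl
    have h1 : (a : ℚ) / (ℓ : ℚ) < 1 := by
      rw [div_lt_one hℓQ]; exact_mod_cast ha
    have h0 : (0:ℚ) ≤ (a : ℚ) / (ℓ : ℚ) := by positivity
    exact ⟨by linarith, by linarith, by rw [den_lr hl ha hcop]; exact hℓ⟩
  · rintro ⟨h0, h1, hden⟩
    simp only [lrQ, Finset.mem_biUnion, Finset.mem_image, Finset.mem_filter,
      Finset.mem_range]
    have hnum : 0 < q.num := Rat.num_pos.mpr h0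
    have hnumle : q.num ≤ (q.den : ℤ) := by
      by_contra hcon
      push_neg at hcon
      have : (1:ℚ) < q := by
        rw [← Rat.num_div_den q]
        rw [lt_div_iff₀ (by exact_mod_cast q.pos)]
        rw [one_mul]; exact_mod_cast hcon
      linarith
    have hle : q.num.toNat ≤ q.den := by omega
    refine ⟨q.den, hden, q.den - q.num.toNat, ⟨by omega, ?_⟩, ?_⟩
    · refine ((Nat.coprime_self_sub_left hle).mpr ?_).symm
      have h := q.reduced
      have hna : q.num.natAbs = q.num.toNat := by omega
      rw [hna] at h
      exact h
    · have hd0 : ((q.den : ℚ)) ≠ 0 := by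
        exact_mod_cast q.den_nz
      have htn : ((q.num.toNat : ℤ)) = q.num := Int.toNat_of_nonneg hnum.le
      have hcast : ((q.den - q.num.toNat : ℕ) : ℚ) = (q.den : ℚ) - (q.num : ℚ) := by
        push_cast [hle]
        have h3 : ((q.num.toNat : ℕ) : ℚ) = (q.num : ℚ) := by exact_mod_cast htn
        rw [h3]
      rw [hcast, sub_div, div_self hd0, sub_sub_cancel]
      exact Rat.num_div_den q

lemma card_lrQ {d : ℕ} (n : Fin d → ℤ) : (lrQ n).card = ∑ ℓ ∈ lrD n, ℓ.totient := by
  rw [lrQ, Finset.card_biUnion]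
  · refine Finset.sum_congr rfl (fun ℓ hℓ => ?_)
    have hl : 0 < ℓ := lrD_pos hℓ
    rw [Finset.card_image_of_injOn, Nat.totient]
    intro a ha b hb hab
    simp only [Finset.coe_filter, Finset.mem_range, Set.mem_setOf_eq] at ha hb
    have : (a : ℚ) / ℓ = (b : ℚ) / ℓ := by linarith [hab]
    have hℓQ : ((ℓ:ℚ)) ≠ 0 := by positivity
    field_simp at this
    exact_mod_cast this
  · intro ℓ hℓ ℓ' hℓ' hne
    simp only [Finset.disjoint_left]
    intro q hq hq'
    simp only [Finset.mem_image, Finset.mem_filter, Finset.mem_range] at hq hq'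
    obtain ⟨a, ⟨ha, hac⟩, rfl⟩ := hq
    obtain ⟨b, ⟨hb, hbc⟩, hq'⟩ := hq'
    have h1 := den_lr (lrD_pos hℓ) ha hac
    have h2 := den_lr (lrD_pos hℓ') hb hbc
    rw [hq'] at h2
    exact hne (h1 ▸ h2 ▸ rfl)

lemma lr_cube (d : ℕ) :
    (∑ j : Fin d, segment ℝ (0 : Fin d → ℝ) (Pi.single j 1)) =
      {x : Fin d → ℝ | ∀ i, 0 ≤ x i ∧ x i ≤ 1} := by
  ext x
  rw [Set.mem_fintype_sum]
  constructor
  · rintro ⟨g, hg, rfl⟩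
    have h : ∀ j, ∃ θ : ℝ, 0 ≤ θ ∧ θ ≤ 1 ∧ g j = θ • (Pi.single j (1:ℝ) : Fin d → ℝ) := by
      intro j
      have hj := hg j
      rw [segment_eq_image] at hj
      obtain ⟨θ, hθ, hjj⟩ := hj
      refine ⟨θ, hθ.1, hθ.2, ?_⟩
      rw [← hjj]; simp
    choose τ h0 h1 hgτ using h
    intro i
    have hsum : (∑ j, g j) i = τ i := by
      rw [Finset.sum_apply]
      rw [Finset.sum_congr rfl (fun j _ => by rw [hgτ j])]
      have : ∀ j, (τ j • (Pi.single j (1:ℝ) : Fin d → ℝ)) i = if i = j then τ j else 0 := by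
        intro j
        simp [Pi.single_apply]
      rw [Finset.sum_congr rfl (fun j _ => this j)]
      simp
    rw [hsum]
    exact ⟨h0 i, h1 i⟩
  · intro hx
    refine ⟨fun j => x j • (Pi.single j (1:ℝ) : Fin d → ℝ), fun j => ?_, ?_⟩
    · rw [segment_eq_image]
      exact ⟨x j, ⟨(hx j).1, (hx j).2⟩, by simp⟩
    · funext i
      rw [Finset.sum_apply]
      have : ∀ j, (x j • (Pi.single j (1:ℝ) : Fin d → ℝ)) i = if i = j then x j else 0 := by
        intro j
        simp [Pi.single_apply]
      rw [Finset.sum_congr rfl (fun j _ => this j)]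
      simp

lemma lr_Zchar {d : ℕ} (n : Fin d → ℤ) (Z : Set (Fin d → ℝ))
    (hZ : Z = (∑ j : Fin d, segment ℝ (0 : Fin d → ℝ) (Pi.single j 1)) +
      segment ℝ (0 : Fin d → ℝ) (fun i => (n i : ℝ))) :
    Z = {x : Fin d → ℝ | ∃ t : ℝ, 0 ≤ t ∧ t ≤ 1 ∧
      ∀ i, t * n i ≤ x i ∧ x i ≤ t * n i + 1} := by
  rw [hZ, lr_cube]
  ext x
  rw [Set.mem_add]
  constructor
  · rintro ⟨a, ha, b, hb, rfl⟩
    rw [segment_eq_image] at hb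
    obtain ⟨t, ht, rfl⟩ := hb
    refine ⟨t, ht.1, ht.2, fun i => ?_⟩
    have h := ha i
    simp only [Pi.add_apply, smul_zero, zero_add, Pi.smul_apply, smul_eq_mul]
    constructor <;> linarith [h.1, h.2]
  · rintro ⟨t, h0, h1, h⟩
    refine ⟨fun i => x i - t * n i,
      fun i => ⟨by dsimp only; linarith [(h i).1], by dsimp only; linarith [(h i).2]⟩,
      fun i => t * (n i : ℝ), ?_, by funext i; simp⟩
    rw [segment_eq_image]
    exact ⟨t, ⟨h0, h1⟩, by funext i; simp⟩

lemma lr_interior {d : ℕ} (n : Fin d → ℤ) (hpos : ∀ i, 0 < n i) (Z : Set (Fin d → ℝ))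
    (hZ : Z = (∑ j : Fin d, segment ℝ (0 : Fin d → ℝ) (Pi.single j 1)) +
      segment ℝ (0 : Fin d → ℝ) (fun i => (n i : ℝ))) :
    interior Z = {x : Fin d → ℝ | ∃ t : ℝ, 0 < t ∧ t < 1 ∧
      ∀ i, t * n i < x i ∧ x i < t * n i + 1} := by
  have hZc := lr_Zchar n Z hZ
  have hnR : ∀ i, (0:ℝ) < (n i : ℝ) := fun i => by exact_mod_cast hpos i
  set U : Set (Fin d → ℝ) := {x : Fin d → ℝ | ∃ t : ℝ, 0 < t ∧ t < 1 ∧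
      ∀ i, t * n i < x i ∧ x i < t * n i + 1} with hU
  have hUZ : U ⊆ Z := by
    rintro x ⟨t, h0, h1, h⟩
    rw [hZc]
    exact ⟨t, h0.le, h1.le, fun i => ⟨(h i).1.le, (h i).2.le⟩⟩
  have hUopen : IsOpen U := by
    have : U = ⋃ t ∈ Set.Ioo (0:ℝ) 1,
        Set.pi Set.univ (fun i => Set.Ioo (t * n i) (t * n i + 1)) := by
      ext x
      simp only [hU, Set.mem_setOf_eq, Set.mem_iUnion, Set.mem_pi, Set.mem_univ,
        Set.mem_Ioo, forall_true_left, exists_prop]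
      constructor
      · rintro ⟨t, h0, h1, h⟩; exact ⟨t, ⟨h0, h1⟩, fun i => h i⟩
      · rintro ⟨t, ⟨h0, h1⟩, h⟩; exact ⟨t, h0, h1, fun i => h i⟩
    rw [this]
    exact isOpen_biUnion fun t _ => isOpen_set_pi Set.finite_univ (fun i _ => isOpen_Ioo)
  refine Set.Subset.antisymm ?_ (hUopen.subset_interior_iff.mpr hUZ)
  intro x hx
  set c : Fin d → ℝ := fun i => 1/2 + (n i : ℝ)/2 with hc
  have hcont : ContinuousAt (fun ε : ℝ => x + ε • (x - c)) 0 := by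
    apply ContinuousAt.add continuousAt_const
    exact (continuousAt_id.smul continuousAt_const)
  have hev : ∀ᶠ ε in nhds (0:ℝ), x + ε • (x - c) ∈ interior Z := by
    apply hcont.eventually_mem (isOpen_interior.mem_nhds ?_)
    simpa using hx
  obtain ⟨δ, hδ, hball⟩ := Metric.eventually_nhds_iff.mp hev
  set ε : ℝ := δ/2 with hε
  have hε0 : 0 < ε := by positivity
  have hmem : x + ε • (x - c) ∈ Z := by
    refine interior_subset (hball ?_)
    rw [Real.dist_eq, sub_zero, abs_of_pos hε0, hε]
    linarith
  rw [hZc] at hmem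
  obtain ⟨s, hs0, hs1, hs⟩ := hmem
  set lam : ℝ := 1/(1+ε) with hlam
  set mu : ℝ := ε/(1+ε) with hmu
  have h1e : (0:ℝ) < 1 + ε := by linarith
  have hlam0 : 0 < lam := by positivity
  have hmu0 : 0 < mu := by positivity
  have hlammu : lam + mu = 1 := by rw [hlam, hmu]; field_simp
  have hxeq : ∀ i, x i = lam * (x + ε • (x - c)) i + mu * c i := by
    intro i
    simp only [Pi.add_apply, Pi.smul_apply, Pi.sub_apply, smul_eq_mul, hlam, hmu]
    field_simp
    ring
  refine ⟨lam * s + mu * (1/2), by nlinarith, by nlinarith, fun i => ?_⟩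
  have h1 := (hs i).1
  have h2 := (hs i).2
  have hci : c i = 1/2 + (n i : ℝ)/2 := rfl
  constructor
  · rw [hxeq i]
    nlinarith [mul_le_mul_of_nonneg_left h1 hlam0.le, hnR i]
  · rw [hxeq i]
    nlinarith [mul_le_mul_of_nonneg_left h2 hlam0.le, hnR i]

lemma lr_recov {d : ℕ} (n : Fin d → ℤ) (hpos : ∀ i, 0 < n i)
    (hne : (Finset.univ : Finset (Fin d)).Nonempty) {q : ℚ} (hq : q ∈ lrQ n) :
    q = Finset.univ.inf' hne (fun i => ((⌈q * (n i : ℚ)⌉ : ℤ) : ℚ) / (n i : ℚ)) := by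
  have hnQ : ∀ i, (0:ℚ) < ((n i : ℤ) : ℚ) := fun i => by exact_mod_cast hpos i
  obtain ⟨hq0, hq1, hden⟩ := mem_lrQ_iff.mp hq
  refine le_antisymm ?_ ?_
  · refine Finset.le_inf' hne _ (fun i _ => ?_)
    rw [le_div_iff₀ (hnQ i)]
    exact Int.le_ceil _
  · simp only [lrD, Finset.mem_biUnion] at hden
    obtain ⟨j, -, hj⟩ := hden
    have hdvd : ((q.den : ℤ)) ∣ n j := by
      have h1 : (q.den : ℤ) ∣ ((n j).toNat : ℤ) := by
        exact_mod_cast (Nat.mem_divisors.mp hj).1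
      rwa [Int.toNat_of_nonneg (hpos j).le] at h1
    obtain ⟨k, hk⟩ := hdvd
    have hqnj : q * ((n j : ℤ) : ℚ) = ((q.num * k : ℤ) : ℚ) := by
      rw [hk]
      push_cast
      rw [← mul_assoc, Rat.mul_den_eq_num]
    have hceilj : (⌈q * ((n j : ℤ) : ℚ)⌉ : ℤ) = q.num * k := by
      rw [hqnj, Int.ceil_intCast]
    have : (((⌈q * ((n j : ℤ) : ℚ)⌉ : ℤ) : ℚ)) / ((n j : ℤ) : ℚ) = q := by
      rw [hceilj, ← hqnj, mul_div_assoc, div_self (hnQ j).ne', mul_one]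
    calc Finset.univ.inf' hne (fun i => ((⌈q * (n i : ℚ)⌉ : ℤ) : ℚ) / (n i : ℚ))
        ≤ ((⌈q * ((n j : ℤ) : ℚ)⌉ : ℤ) : ℚ) / ((n j : ℤ) : ℚ) :=
          Finset.inf'_le _ (Finset.mem_univ j)
      _ = q := this

theorem num_interior_lattice_points_lonely_runner_zonotope
    {d : ℕ} (hd : 2 ≤ d) (n : Fin d → ℤ) (hpos : ∀ i, 0 < n i)
    (hdist : Function.Injective n) (hgcd : Finset.univ.gcd n = 1)
    (Z : Set (Fin d → ℝ))
    (hZ : Z = (∑ j : Fin d, segment ℝ (0 : Fin d → ℝ) (Pi.single j 1)) +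
      segment ℝ (0 : Fin d → ℝ) (fun i => (n i : ℝ))) :
    {x | x ∈ interior Z ∧ IsLatticePoint x}.ncard =
      ∑ ℓ ∈ Finset.univ.biUnion (fun j : Fin d => (n j).toNat.divisors), ℓ.totient := by
  have hne : (Finset.univ : Finset (Fin d)).Nonempty := ⟨⟨0, by omega⟩, Finset.mem_univ _⟩
  have hnQ : ∀ i, (0:ℚ) < ((n i : ℤ) : ℚ) := fun i => by exact_mod_cast hpos i
  have hnR : ∀ i, (0:ℝ) < ((n i : ℤ) : ℝ) := fun i => by exact_mod_cast hpos i
  have hintZ := lr_interior n hpos Z hZ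
  set Ψ : ℚ → (Fin d → ℝ) := fun q => (fun i => ((⌈q * (n i : ℚ)⌉ : ℤ) : ℝ)) with hΨ
  have hS : {x | x ∈ interior Z ∧ IsLatticePoint x} = Ψ '' ↑(lrQ n) := by
    ext x
    constructor
    · rintro ⟨hxi, hlat⟩
      rw [hintZ] at hxi
      obtain ⟨t, ht0, ht1, ht⟩ := hxi
      choose m hm using hlat
      have hti : ∀ i, t * n i < (m i : ℝ) ∧ (m i : ℝ) < t * n i + 1 := by
        intro i
        have := ht i
        rw [hm i] at this
        exact this
      have hmpos : ∀ i, 0 < m i := by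
        intro i
        have h1 : (0:ℝ) < (m i : ℝ) := lt_trans (mul_pos ht0 (hnR i)) (hti i).1
        exact_mod_cast h1
      have hmlen : ∀ i, m i ≤ n i := by
        intro i
        have h2 := (hti i).2
        have h3 : (m i : ℝ) < (n i : ℝ) + 1 := by nlinarith [hnR i]
        have h4 : m i < n i + 1 := by exact_mod_cast h3
        omega
      set q : ℚ := Finset.univ.inf' hne (fun i => (m i : ℚ) / (n i : ℚ)) with hqdef
      obtain ⟨j, -, hj⟩ := Finset.exists_mem_eq_inf' hne (fun i => (m i : ℚ) / (n i : ℚ))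
      have hqj : q = (m j : ℚ) / (n j : ℚ) := hj
      have hqle : ∀ i, q ≤ (m i : ℚ) / (n i : ℚ) := fun i => Finset.inf'_le _ (Finset.mem_univ i)
      have hq0 : 0 < q := by
        rw [hqj]
        exact div_pos (by exact_mod_cast hmpos j) (hnQ j)
      have hq1 : q ≤ 1 := by
        rw [hqj, div_le_one (hnQ j)]
        exact_mod_cast hmlen j
      have hqR : (q : ℝ) = (m j : ℝ) / (n j : ℝ) := by
        rw [hqj]
        push_cast
        ring
      have hqt : t < (q : ℝ) := by
        rw [hqR, lt_div_iff₀ (hnR j)]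
        exact (hti j).1
      have hqu : ∀ i, q * (n i : ℚ) ≤ (m i : ℚ) := by
        intro i
        have := hqle i
        rwa [le_div_iff₀ (hnQ i)] at this
      have hql : ∀ i, (m i : ℚ) - 1 < q * (n i : ℚ) := by
        intro i
        have h1 : (m i : ℝ) - 1 < t * n i := by linarith [(hti i).2]
        have h2 : t * (n i : ℝ) < (q : ℝ) * (n i : ℝ) :=
          mul_lt_mul_of_pos_right hqt (hnR i)
        have h3 : (m i : ℝ) - 1 < (q : ℝ) * (n i : ℝ) := by linarith
        exact_mod_cast h3
      have hceil : ∀ i, ⌈q * (n i : ℚ)⌉ = m i := by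
        intro i
        rw [Int.ceil_eq_iff]
        exact ⟨by exact_mod_cast hql i, hqu i⟩
      have hdenD : q.den ∈ lrD n := by
        have hdvd : ((q.den : ℤ)) ∣ n j := by
          rw [hqj, ← Rat.divInt_eq_div]
          exact Rat.den_dvd (m j) (n j)
        have hdvd' : q.den ∣ (n j).toNat := by
          have hnn : ((n j).toNat : ℤ) = n j := Int.toNat_of_nonneg (hpos j).le
          rw [← hnn] at hdvd
          exact_mod_cast hdvd
        simp only [lrD, Finset.mem_biUnion]
        exact ⟨j, Finset.mem_univ j, Nat.mem_divisors.mpr ⟨hdvd', by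
          have := hpos j; omega⟩⟩
      refine ⟨q, mem_lrQ_iff.mpr ⟨hq0, hq1, hdenD⟩, ?_⟩
      funext i
      show ((⌈q * (n i : ℚ)⌉ : ℤ) : ℝ) = x i
      rw [hceil i, hm i]
    · rintro ⟨q, hqmem, rfl⟩
      obtain ⟨hq0, hq1, hden⟩ := mem_lrQ_iff.mp hqmem
      set m : Fin d → ℤ := fun i => ⌈q * (n i : ℚ)⌉ with hmdef
      have hmu : ∀ i, q * (n i : ℚ) ≤ (m i : ℚ) := fun i => Int.le_ceil _
      have hml : ∀ i, (m i : ℚ) < q * (n i : ℚ) + 1 := fun i => Int.ceil_lt_add_one _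
      have hmpos : ∀ i, (0:ℚ) < (m i : ℚ) :=
        fun i => lt_of_lt_of_le (mul_pos hq0 (hnQ i)) (hmu i)
      set M : ℚ := Finset.univ.sup' hne (fun i => ((m i : ℚ) - 1) / (n i : ℚ)) with hMdef
      have i0 : Fin d := ⟨0, by omega⟩
      have hM0 : 0 ≤ M := by
        have h1 : (0:ℚ) ≤ ((m i0 : ℚ) - 1) / (n i0 : ℚ) := by
          apply div_nonneg _ (hnQ _).le
          have := hmpos i0
          have h2 : (1:ℚ) ≤ (m i0 : ℚ) := by
            have h3 : (0:ℤ) < m i0 := by exact_mod_cast this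
            exact_mod_cast h3
          linarith
        exact le_trans h1 (Finset.le_sup' (fun i => ((m i : ℚ) - 1) / (n i : ℚ)) (Finset.mem_univ i0))
      have hMq : M < q := by
        rw [hMdef, Finset.sup'_lt_iff]
        intro i _
        rw [div_lt_iff₀ (hnQ i)]
        linarith [hml i]
      set t : ℚ := (M + q)/2 with htdef
      have ht0 : 0 < t := by rw [htdef]; linarith
      have htq : t < q := by rw [htdef]; linarith
      have htM : M < t := by rw [htdef]; linarith
      have ht1 : t < 1 := lt_of_lt_of_le htq hq1
      have hlow : ∀ i, t * (n i : ℚ) < (m i : ℚ) :=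
        fun i => lt_of_lt_of_le (mul_lt_mul_of_pos_right htq (hnQ i)) (hmu i)
      have hhigh : ∀ i, (m i : ℚ) < t * (n i : ℚ) + 1 := by
        intro i
        have h0 : ((m i : ℚ) - 1) / (n i : ℚ) ≤ M := by
          rw [hMdef]
          exact Finset.le_sup' (fun i => ((m i : ℚ) - 1) / (n i : ℚ)) (Finset.mem_univ i)
        have h1 : ((m i : ℚ) - 1) / (n i : ℚ) < t := lt_of_le_of_lt h0 htM
        rw [div_lt_iff₀ (hnQ i)] at h1
        linarith
      constructor
      · rw [hintZ]
        refine ⟨(t : ℝ), by exact_mod_cast ht0, by exact_mod_cast ht1, fun i => ?_⟩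
        constructor
        · show (t:ℝ) * ((n i : ℤ) : ℝ) < ((⌈q * (n i : ℚ)⌉ : ℤ) : ℝ)
          exact_mod_cast hlow i
        · show ((⌈q * (n i : ℚ)⌉ : ℤ) : ℝ) < (t:ℝ) * ((n i : ℤ) : ℝ) + 1
          exact_mod_cast hhigh i
      · exact fun i => ⟨⌈q * (n i : ℚ)⌉, rfl⟩
  have hInj : Set.InjOn Ψ ↑(lrQ n) := by
    intro q hq q' hq' hEq
    simp only [hΨ] at hEq
    have hceq : ∀ i, ⌈q * (n i : ℚ)⌉ = ⌈q' * (n i : ℚ)⌉ := by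
      intro i
      have := congrFun hEq i
      exact_mod_cast this
    have h1 := lr_recov n hpos hne (Finset.mem_coe.mp hq)
    have h2 := lr_recov n hpos hne (Finset.mem_coe.mp hq')
    rw [h1, h2]
    refine congrArg _ (funext fun i => ?_)
    rw [hceq i]
  rw [hS, Set.ncard_image_of_injOn hInj, Set.ncard_coe_finset]
  exact card_lrQ n
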